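/- If a (v,k,λ) directed design 𝒟 contains a cyclical trade T = T₁ − T₂ of volume s, then every defining set of 𝒟 must contain at least ⌊(s+1)/2⌋ blocks of T₁. -/

import Mathlib

/-- `B` is the block collection of a `(v,k,λ)` directed design on `Fin v`:
blocks are ordered `k`-tuples of distinct points, and every ordered pair of
distinct points appears (in order) in exactly `lam` blocks.
(An ordered pair `(x,y)` appears in a block iff `[x,y]` is a sublist of it.) -/
def IsDirectedDesign (v k lam : ℕ) (B : Multiset (List (Fin v))) : Prop :=
  (∀ b ∈ B, b.length = k ∧ b.Nodup) ∧
  ∀ x y : Fin v, x ≠ y →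
    Multiset.countP (fun b => [x, y].Sublist b) B = lam

/-- A block collection is super-simple if any two of its blocks (counted with
multiplicity) share at most two points. -/
def SuperSimple (v : ℕ) (B : Multiset (List (Fin v))) : Prop :=
  ∀ b₁ b₂ : List (Fin v), ({b₁, b₂} : Multiset (List (Fin v))) ≤ B →
    (b₁.toFinset ∩ b₂.toFinset).card ≤ 2

/-- `S` is a defining set of the `(v,k,λ)` directed design `B`: it is a
subcollection of `B`, and `B` is the unique `(v,k,λ)` directed design whose
block collection contains `S`. -/
def IsDefiningSet (v k lam : ℕ) (B S : Multiset (List (Fin v))) : Prop :=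
  S ≤ B ∧ ∀ B' : Multiset (List (Fin v)),
    IsDirectedDesign v k lam B' → S ≤ B' → B' = B

/-- `d ≥ 1/2`: every defining set of `B` (in particular a smallest one)
contains at least half of its blocks. -/
def DefiningSetsAtLeastHalf (v k lam : ℕ) (B : Multiset (List (Fin v))) : Prop :=
  ∀ S : Multiset (List (Fin v)), IsDefiningSet v k lam B S →
    Multiset.card B ≤ 2 * Multiset.card S

/-- `T = T₁ - T₂` is a `(v,k,t)` directed trade: `T₁` and `T₂` are disjoint
nonempty collections of ordered `k`-tuples of distinct points, of equal size
(the volume), and every ordered `t`-tuple of distinct points is covered by the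
same number of blocks of `T₁` as of `T₂`. -/
def IsDirectedTrade (v k t : ℕ) (T₁ T₂ : Multiset (List (Fin v))) : Prop :=
  T₁ ≠ 0 ∧ (∀ b ∈ T₁, b ∉ T₂) ∧ Multiset.card T₁ = Multiset.card T₂ ∧
  (∀ b ∈ T₁ + T₂, b.length = k ∧ b.Nodup) ∧
  ∀ p : List (Fin v), p.length = t → p.Nodup →
    Multiset.countP (fun b => p.Sublist b) T₁ =
      Multiset.countP (fun b => p.Sublist b) T₂

/-- `T = T₁ - T₂` is a cyclical trade of volume `s`: it is a `(v,k,2)` directed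
trade of volume `s` whose first collection can be enumerated as
`b 0, b 1, …, b (s-1)` so that each pair of consecutive blocks
`b i, b ((i+1) % s)`, together with corresponding blocks of `T₂`, forms a
directed trade of volume `2`. -/
def IsCyclicalTrade (v k s : ℕ) (T₁ T₂ : Multiset (List (Fin v))) : Prop :=
  IsDirectedTrade v k 2 T₁ T₂ ∧ Multiset.card T₁ = s ∧
  ∃ b : ℕ → List (Fin v),
    T₁ = ↑((List.range s).map b) ∧
    ∀ i < s, ∃ U : Multiset (List (Fin v)), U ≤ T₂ ∧
      IsDirectedTrade v k 2 {b i, b ((i + 1) % s)} U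

open List in
lemma pair_sublist_tail {α : Type*} {a b d : α} {l : List α}
    (h : [a, b] <+ d :: l) (hne : a ≠ d) : [a, b] <+ l := by
  cases h with
  | cons _ h => exact h
  | cons_cons => exact absurd rfl hne

open List in
lemma exists_pair_of_mem {α : Type*} {c : α} {x : List α} (hc : c ∈ x)
    (hlen : 2 ≤ x.length) (hnd : x.Nodup) :
    ∃ d, d ≠ c ∧ ([c, d] <+ x ∨ [d, c] <+ x) := by
  cases x with
  | nil => simp at hc
  | cons e t =>
    rcases eq_or_ne c e with rfl | hne
    · match t, hlen with
      | d :: td, _ =>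
        refine ⟨d, ?_, Or.inl ?_⟩
        · have : c ∉ d :: td := (List.nodup_cons.mp hnd).1
          intro h; exact this (h ▸ List.mem_cons_self)
        · exact List.cons_sublist_cons.mpr (List.cons_sublist_cons.mpr (List.nil_sublist _))
    · have hct : c ∈ t := by
        rcases List.mem_cons.mp hc with h | h
        · exact absurd h hne
        · exact h
      exact ⟨e, fun h => hne h.symm, Or.inr
        (List.cons_sublist_cons.mpr (List.singleton_sublist.mpr hct))⟩

open List in
lemma eq_of_mem_pairs {α : Type*} : ∀ (x u : List α), x.Nodup → u.Nodup →
    (∀ c, c ∈ x ↔ c ∈ u) →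
    (∀ a b, a ≠ b → ([a, b] <+ x ↔ [a, b] <+ u)) → x = u := by
  intro x
  induction x with
  | nil =>
    intro u _ _ hmem _
    exact (List.eq_nil_iff_forall_not_mem.mpr (fun c hc => by simp [← hmem c] at hc)).symm
  | cons a x' ih =>
    intro u hx hu hmem hpair
    have hau : a ∈ u := (hmem a).mp (List.mem_cons_self)
    obtain ⟨d, u', rfl⟩ : ∃ d u', u = d :: u' := by
      cases u with
      | nil => simp at hau
      | cons d u' => exact ⟨d, u', rfl⟩
    have hda : a = d := by
      by_contra hda
      have hdx : d ∈ a :: x' := (hmem d).mpr (List.mem_cons_self)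
      have hdx' : d ∈ x' := by
        rcases List.mem_cons.mp hdx with h | h
        · exact absurd h.symm hda
        · exact h
      have h1 : [a, d] <+ a :: x' :=
        List.cons_sublist_cons.mpr (List.singleton_sublist.mpr hdx')
      have h2 : [a, d] <+ d :: u' := (hpair a d hda).mp h1
      have h3 : [a, d] <+ u' := pair_sublist_tail h2 hda
      exact (List.nodup_cons.mp hu).1 (h3.subset (by simp))
    subst hda
    have hax' : a ∉ x' := (List.nodup_cons.mp hx).1
    have hau' : a ∉ u' := (List.nodup_cons.mp hu).1
    congr 1
    refine ih u' (List.nodup_cons.mp hx).2 (List.nodup_cons.mp hu).2 ?_ ?_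
    · intro c
      constructor
      · intro hc
        have hca : c ≠ a := fun h => hax' (h ▸ hc)
        rcases List.mem_cons.mp ((hmem c).mp (List.mem_cons_of_mem _ hc)) with h | h
        · exact absurd h hca
        · exact h
      · intro hc
        have hca : c ≠ a := fun h => hau' (h ▸ hc)
        rcases List.mem_cons.mp ((hmem c).mpr (List.mem_cons_of_mem _ hc)) with h | h
        · exact absurd h hca
        · exact h
    · intro p q hpq
      constructor
      · intro h
        have hpa : p ≠ a := fun hh => hax' (hh ▸ h.subset (by simp))
        exact pair_sublist_tail ((hpair p q hpq).mp (h.cons _)) hpa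
      · intro h
        have hpa : p ≠ a := fun hh => hau' (hh ▸ h.subset (by simp))
        exact pair_sublist_tail ((hpair p q hpq).mpr (h.cons _)) hpa

open List in
lemma no_double_trade {v k : ℕ} (hk : 2 ≤ k) (x : List (Fin v))
    (U : Multiset (List (Fin v))) : ¬ IsDirectedTrade v k 2 {x, x} U := by
  rintro ⟨-, hdisj, hcard, hblocks, hpairs⟩
  have hxU : x ∉ U := hdisj x (by simp)
  have hcardU : Multiset.card U = 2 := by
    simpa using hcard.symm
  obtain ⟨u, hu⟩ : ∃ u, u ∈ U := Multiset.exists_mem_of_ne_zero (by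
    intro h; rw [h] at hcardU; simp at hcardU)
  have hxprop : x.length = k ∧ x.Nodup :=
    hblocks x (Multiset.mem_add.mpr (Or.inl (by simp)))
  have huprop : u.length = k ∧ u.Nodup :=
    hblocks u (Multiset.mem_add.mpr (Or.inr hu))
  have hpair : ∀ a c : Fin v, a ≠ c → ([a, c] <+ x ↔ [a, c] <+ u) := by
    intro a c hac
    have hkey := hpairs [a, c] rfl (by simp [hac])
    have hXX : Multiset.countP (fun b => [a, c] <+ b) ({x, x} : Multiset (List (Fin v)))
        = if [a, c] <+ x then 2 else 0 := by
      show Multiset.countP _ (x ::ₘ {x}) = _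
      rw [Multiset.countP_cons]
      show Multiset.countP _ (x ::ₘ 0) + _ = _
      rw [Multiset.countP_cons]
      split <;> simp
    constructor
    · intro h
      rw [hXX, if_pos h] at hkey
      have : Multiset.countP (fun b => [a, c] <+ b) U = Multiset.card U := by omega
      exact Multiset.countP_eq_card.mp this u hu
    · intro h
      have hpos : 0 < Multiset.countP (fun b => [a, c] <+ b) U :=
        Multiset.countP_pos.mpr ⟨u, hu, h⟩
      rw [hXX] at hkey
      by_contra hnx
      rw [if_neg hnx] at hkey
      omega
  have hmem : ∀ c, c ∈ x ↔ c ∈ u := by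
    intro c
    constructor
    · intro hc
      obtain ⟨d, hdc, hor⟩ := exists_pair_of_mem hc (hxprop.1 ▸ hk) hxprop.2
      rcases hor with h | h
      · exact ((hpair c d (fun hh => hdc hh.symm)).mp h).subset (by simp)
      · exact ((hpair d c hdc).mp h).subset (by simp)
    · intro hc
      obtain ⟨d, hdc, hor⟩ := exists_pair_of_mem hc (huprop.1 ▸ hk) huprop.2
      rcases hor with h | h
      · exact ((hpair c d (fun hh => hdc hh.symm)).mpr h).subset (by simp)
      · exact ((hpair d c hdc).mpr h).subset (by simp)
  have : x = u := eq_of_mem_pairs x u hxprop.2 huprop.2 hmem hpair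
  exact hxU (this ▸ hu)

lemma swap_design {v k lam : ℕ} {B P U : Multiset (List (Fin v))}
    (hB : IsDirectedDesign v k lam B) (hP : P ≤ B)
    (ht : IsDirectedTrade v k 2 P U) : IsDirectedDesign v k lam (B - P + U) := by
  obtain ⟨-, -, -, hblocks, hpairs⟩ := ht
  constructor
  · intro c hc
    rcases Multiset.mem_add.mp hc with h | h
    · exact hB.1 c (Multiset.mem_of_le (Multiset.sub_le_self B P) h)
    · exact hblocks c (Multiset.mem_add.mpr (Or.inr h))
  · intro x y hxy
    have hPU := hpairs [x, y] rfl (by simp [hxy])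
    have hsplit : Multiset.countP (fun b => [x, y].Sublist b) (B - P)
        + Multiset.countP (fun b => [x, y].Sublist b) P
        = Multiset.countP (fun b => [x, y].Sublist b) B := by
      rw [← Multiset.countP_add, tsub_add_cancel_of_le hP]
    rw [Multiset.countP_add, ← hPU]
    have := hB.2 x y hxy
    omega

lemma mod_succ_lemma {i i' s : ℕ} (hi : i < s) (hi' : i' < s)
    (h : (i + 1) % s = (i' + 1) % s) : i = i' := by
  have e1 : (i + 1) % s = if i + 1 = s then 0 else i + 1 := by
    split
    · next hh => rw [hh, Nat.mod_self]
    · exact Nat.mod_eq_of_lt (by omega)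
  have e2 : (i' + 1) % s = if i' + 1 = s then 0 else i' + 1 := by
    split
    · next hh => rw [hh, Nat.mod_self]
    · exact Nat.mod_eq_of_lt (by omega)
  rw [e1, e2] at h
  split_ifs at h <;> omega

/-- If a `(v,k,λ)` directed design `B` contains a cyclical trade `T₁ - T₂` of
volume `s`, then every defining set of `B` contains at least `⌊(s+1)/2⌋`
blocks of `T₁`. -/
theorem definingSet_card_of_cyclical_trade (v k lam s : ℕ)
    (B : Multiset (List (Fin v))) (hB : IsDirectedDesign v k lam B)
    (T₁ T₂ : Multiset (List (Fin v))) (hcyc : IsCyclicalTrade v k s T₁ T₂)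
    (hsub : T₁ ≤ B) :
    ∀ S : Multiset (List (Fin v)), IsDefiningSet v k lam B S →
      (s + 1) / 2 ≤ Multiset.card (S ∩ T₁) := by
  intro S hS
  obtain ⟨⟨hne, hdisj, hceq, hblocks, hTpairs⟩, hcards, b, hT1, hcons⟩ := hcyc
  rcases Nat.lt_or_ge k 2 with hk | hk
  · -- k ≤ 1 : no defining set can exist
    exfalso
    obtain ⟨b₀, hb₀⟩ := Multiset.exists_mem_of_ne_zero hne
    have hb₀p : b₀.length = k ∧ b₀.Nodup := hblocks b₀ (Multiset.mem_add.mpr (Or.inl hb₀))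
    have hdes : IsDirectedDesign v k lam (b₀ ::ₘ B) := by
      constructor
      · intro c hc
        rcases Multiset.mem_cons.mp hc with rfl | hc
        · exact hb₀p
        · exact hB.1 c hc
      · intro x y hxy
        rw [Multiset.countP_cons]
        have hns : ¬ ([x, y].Sublist b₀) := by
          intro h
          have h2 := h.length_le
          rw [hb₀p.1] at h2
          simp at h2
          omega
        rw [if_neg hns, hB.2 x y hxy]
        omega
    have heq := hS.2 _ hdes (le_trans hS.1 (Multiset.le_cons_self _ _))
    have := congrArg Multiset.card heq
    simp at this
  · -- k ≥ 2
    have hs0 : 0 < s := by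
      rcases Nat.eq_zero_or_pos s with rfl | h
      · exact absurd (by simpa using hT1) hne
      · exact h
    have hA : ∀ i < s, b i ≠ b ((i + 1) % s) := by
      intro i hi heq
      obtain ⟨U, hU, htU⟩ := hcons i hi
      rw [← heq] at htU
      exact no_double_trade hk _ U htU
    have hs2 : 2 ≤ s := by
      by_contra h
      have hs1 : s = 1 := by omega
      exact hA 0 (by omega) (by rw [hs1])
    have hmemT1 : ∀ i < s, b i ∈ T₁ := by
      intro i hi
      rw [hT1]
      exact Multiset.mem_coe.mpr (List.mem_map.mpr ⟨i, List.mem_range.mpr hi, rfl⟩)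
    -- Step B
    have hStepB : ∀ i < s,
        Multiset.count (b i) B ≤ Multiset.count (b i) S ∨
        Multiset.count (b ((i + 1) % s)) B ≤ Multiset.count (b ((i + 1) % s)) S := by
      intro i hi
      by_contra hcon
      push_neg at hcon
      obtain ⟨h1, h2⟩ := hcon
      set j := (i + 1) % s with hj
      have hjs : j < s := Nat.mod_lt _ hs0
      have hij : i ≠ j := by
        intro h
        have e1 : (i + 1) % s = if i + 1 = s then 0 else i + 1 := by
          split
          · next hh => rw [hh, Nat.mod_self]
          · exact Nat.mod_eq_of_lt (by omega)
        rw [← hj] at e1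
        split_ifs at e1 <;> omega
      obtain ⟨U, hUT2, htU⟩ := hcons i hi
      set P : Multiset (List (Fin v)) := {b i, b j} with hP
      have hPT1 : P ≤ T₁ := by
        rw [hT1, hP]
        have hle : (↑[i, j] : Multiset ℕ) ≤ ↑(List.range s) := by
          rw [Multiset.le_iff_subset (by simp [hij])]
          intro x hx
          simp only [Multiset.mem_coe, List.mem_range]
          rcases List.mem_cons.mp (Multiset.mem_coe.mp hx) with rfl | hx
          · exact hi
          · simp at hx; omega
        have := Multiset.map_le_map (f := b) hle
        convert this using 1 <;> simp <;> rfl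
      have hPB : P ≤ B := hPT1.trans hsub
      have hbne : b i ≠ b j := hA i hi
      have hcount_P : ∀ c : List (Fin v), Multiset.count c P =
          (if c = b i then 1 else 0) + (if c = b j then 1 else 0) := by
        intro c
        show Multiset.count c (b i ::ₘ {b j}) = _
        rw [Multiset.count_cons, Multiset.count_singleton]
        exact Nat.add_comm _ _
      have hSle : S ≤ B - P := by
        rw [Multiset.le_iff_count]
        intro c
        rw [Multiset.count_sub]
        have hcSB : Multiset.count c S ≤ Multiset.count c B :=
          Multiset.count_le_of_le c hS.1
        rw [hcount_P c]
        by_cases hci : c = b i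
        · subst hci
          rw [if_pos rfl, if_neg hbne]
          omega
        · by_cases hcj : c = b j
          · subst hcj
            rw [if_neg hci, if_pos rfl]
            omega
          · rw [if_neg hci, if_neg hcj]
            omega
      have hdes : IsDirectedDesign v k lam (B - P + U) := swap_design hB hPB htU
      have hSle2 : S ≤ B - P + U := hSle.trans (Multiset.le_add_right _ _)
      have heq := hS.2 _ hdes hSle2
      -- contradiction via count of b i
      have hbiU : b i ∉ U := fun h =>
        hdisj (b i) (hmemT1 i hi) (Multiset.mem_of_le hUT2 h)
      have hcbiB : 0 < Multiset.count (b i) B :=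
        Multiset.count_pos.mpr (Multiset.mem_of_le hsub (hmemT1 i hi))
      have hcnt := congrArg (Multiset.count (b i)) heq
      rw [Multiset.count_add, Multiset.count_sub,
        Multiset.count_eq_zero.mpr hbiU] at hcnt
      have hcP1 : Multiset.count (b i) P = 1 := by
        rw [hcount_P (b i), if_pos rfl, if_neg hbne]
      rw [hcP1] at hcnt
      omega
    -- Counting
    set G : Finset ℕ := (Finset.range s).filter
      (fun i => Multiset.count (b i) B ≤ Multiset.count (b i) S) with hG
    have hGmem : ∀ i, i ∈ G ↔
        (i < s ∧ Multiset.count (b i) B ≤ Multiset.count (b i) S) := by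
      intro i
      rw [hG, Finset.mem_filter, Finset.mem_range]
    have hGood : ∀ i < s, i ∉ G → (i + 1) % s ∈ G := by
      intro i hi hiG
      rcases hStepB i hi with h | h
      · exact absurd ((hGmem i).mpr ⟨hi, h⟩) hiG
      · exact (hGmem _).mpr ⟨Nat.mod_lt _ hs0, h⟩
    have hcard1 : s ≤ 2 * G.card := by
      set Bad : Finset ℕ := Finset.range s \ G with hBad
      have hmapsto : ∀ i ∈ Bad, (i + 1) % s ∈ G := by
        intro i hi
        obtain ⟨hi1, hi2⟩ := Finset.mem_sdiff.mp hi
        exact hGood i (Finset.mem_range.mp hi1) hi2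
      have hinj : Set.InjOn (fun i => (i + 1) % s) Bad := by
        intro i hi i' hi' h
        exact mod_succ_lemma
          (Finset.mem_range.mp (Finset.mem_sdiff.mp hi).1)
          (Finset.mem_range.mp (Finset.mem_sdiff.mp hi').1) h
      have hle := Finset.card_le_card_of_injOn _ hmapsto hinj
      have hcb : Bad.card = s - G.card := by
        rw [hBad, Finset.card_sdiff_of_subset (Finset.filter_subset _ _), Finset.card_range]
      have hGs : G.card ≤ s := by
        calc G.card ≤ (Finset.range s).card := Finset.card_le_card (Finset.filter_subset _ _)
        _ = s := Finset.card_range s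
      omega
    have hcard2 : G.card ≤ Multiset.card (S ∩ T₁) := by
      set M : Multiset (List (Fin v)) := G.val.map b with hM
      have hMT1 : M ≤ T₁ := by
        rw [hT1, hM]
        have : G.val ≤ (Finset.range s).val :=
          Finset.val_le_iff.mpr (Finset.filter_subset _ _)
        have h2 := Multiset.map_le_map (f := b) this
        simpa [Finset.range, Multiset.range] using h2
      have hMS : M ≤ S := by
        rw [Multiset.le_iff_count]
        intro c
        rcases Nat.eq_zero_or_pos (Multiset.count c M) with h0 | hpos
        · omega
        · obtain ⟨i, hiG, hbic⟩ := Multiset.mem_map.mp (Multiset.count_pos.mp hpos)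
          have hgood : Multiset.count (b i) B ≤ Multiset.count (b i) S :=
            ((hGmem i).mp hiG).2
          calc Multiset.count c M ≤ Multiset.count c T₁ := Multiset.count_le_of_le c hMT1
            _ ≤ Multiset.count c B := Multiset.count_le_of_le c hsub
            _ = Multiset.count (b i) B := by rw [hbic]
            _ ≤ Multiset.count (b i) S := hgood
            _ = Multiset.count c S := by rw [hbic]
      have hMint : M ≤ S ∩ T₁ := Multiset.le_inter hMS hMT1
      have := Multiset.card_le_card hMint
      rw [hM] at this
      simpa using this
    omega
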